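/- Let q = 2^h, m = hk with gcd(i, m) = 1, and let σ(t) = t^(2^i) on F_{q^k}. Suppose u1, u2, u3 ∈ F_{q^k}^* are such that no two of them are F_q-proportional (i.e., u_a/u_b ∉ F_q for a ≠ b), and suppose there exist λ, μ ∈ F_q with u1 + λ u2 = μ u3 and σ(u1) + λ σ(u2) = μ σ(u3). Then λ = μ = 1. -/

import Mathlib

private lemma pow_two_pow_fix {F : Type*} [Monoid F] (a : F) (d : ℕ)
    (ha : a ^ 2 ^ d = a) : ∀ n, a ^ 2 ^ (d * n) = a := by
  intro n
  induction n with
  | zero => simp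
  | succ n ih => rw [Nat.mul_succ, pow_add, pow_mul, ih, ha]

/-- Let `q = 2^h`, `K = F_{q^k}` with `gcd(i, hk) = 1` and `σ(t) = t^(2^i)`.
If `u1, u2, u3 ∈ K^*` are pairwise non-`F_q`-proportional and `λ, μ ∈ F_q` satisfy
`u1 + λ u2 = μ u3` and `σ(u1) + λ σ(u2) = μ σ(u3)`, then `λ = μ = 1`. -/
theorem pseudoregulus_three_secant (h k i : ℕ) (hh : 1 ≤ h) (hk : 1 ≤ k)
    (hgcd : Nat.gcd i (h * k) = 1)
    (Fq K : Type) [Field Fq] [Field K] [Algebra Fq K]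
    [Fintype Fq] [Fintype K]
    (hq : Fintype.card Fq = 2 ^ h) (hK : Fintype.card K = 2 ^ (h * k))
    (u1 u2 u3 : K) (hu1 : u1 ≠ 0) (hu2 : u2 ≠ 0) (hu3 : u3 ≠ 0)
    (h12 : ¬∃ c : Fq, u1 = algebraMap Fq K c * u2)
    (h13 : ¬∃ c : Fq, u1 = algebraMap Fq K c * u3)
    (h23 : ¬∃ c : Fq, u2 = algebraMap Fq K c * u3)
    (lam mu : Fq)
    (e1 : u1 + algebraMap Fq K lam * u2 = algebraMap Fq K mu * u3)
    (e2 : u1 ^ 2 ^ i + algebraMap Fq K lam * u2 ^ 2 ^ i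
            = algebraMap Fq K mu * u3 ^ 2 ^ i) :
    lam = 1 ∧ mu = 1 := by
  set A := algebraMap Fq K with hA
  have hAinj : Function.Injective A := (algebraMap Fq K).injective
  -- characteristic 2
  haveI : CharP K (ringChar K) := ringChar.charP K
  have hchar2 : ringChar K = 2 := by
    have hp : (ringChar K).Prime := CharP.char_is_prime K (ringChar K)
    obtain ⟨n, -, hcard⟩ := FiniteField.card K (ringChar K)
    rw [hK] at hcard
    have hdvd : ringChar K ∣ 2 ^ (h * k) := hcard ▸ dvd_pow_self _ n.ne_zero
    exact (Nat.prime_dvd_prime_iff_eq hp Nat.prime_two).mp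
      (hp.dvd_of_dvd_pow hdvd)
  haveI hK2 : CharP K 2 := hchar2 ▸ ringChar.charP K
  haveI hFq2 : CharP Fq 2 := (algebraMap Fq K).charP hAinj 2
  haveI : Fact (Nat.Prime 2) := ⟨Nat.prime_two⟩
  have h2i0 : 2 ^ i ≠ 0 := (Nat.pow_pos (by norm_num)).ne'
  -- injectivity of x ↦ x^(2^i)
  have frobK_inj : ∀ x y : K, x ^ 2 ^ i = y ^ 2 ^ i → x = y := by
    intro x y hxy
    have hz : (x - y) ^ 2 ^ i = 0 := by
      rw [sub_pow_char_pow, hxy, sub_self]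
    exact sub_eq_zero.mp (pow_eq_zero_iff h2i0 |>.mp hz)
  have frobF_inj : Function.Injective (fun x : Fq => x ^ 2 ^ i) := by
    intro x y hxy
    have hz : (x - y) ^ 2 ^ i = 0 := by
      rw [sub_pow_char_pow]; simpa using sub_eq_zero.mpr hxy
    exact sub_eq_zero.mp (pow_eq_zero_iff h2i0 |>.mp hz)
  have frobF_surj : Function.Surjective (fun x : Fq => x ^ 2 ^ i) :=
    Finite.surjective_of_injective frobF_inj
  -- the key subtracted equation
  have e1' : u1 ^ 2 ^ i + (A lam) ^ 2 ^ i * u2 ^ 2 ^ i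
      = (A mu) ^ 2 ^ i * u3 ^ 2 ^ i := by
    have := congrArg (fun x : K => x ^ 2 ^ i) e1
    simpa [add_pow_char_pow, mul_pow] using this
  have key : ((A lam) ^ 2 ^ i - A lam) * u2 ^ 2 ^ i
      = ((A mu) ^ 2 ^ i - A mu) * u3 ^ 2 ^ i := by
    linear_combination e1' - e2
  have hu2p : u2 ^ 2 ^ i ≠ 0 := pow_ne_zero _ hu2
  have hu3p : u3 ^ 2 ^ i ≠ 0 := pow_ne_zero _ hu3
  -- λ is fixed by σ
  have hlamfix : lam ^ 2 ^ i = lam := by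
    by_contra hne
    have hCl : (A lam) ^ 2 ^ i - A lam ≠ 0 := by
      rw [← map_pow, ← map_sub]
      exact fun hc => hne (sub_eq_zero.mp (hAinj (by simpa using hc)))
    -- u2^(2^i) = A c * u3^(2^i) for c in Fq
    set c : Fq := (mu ^ 2 ^ i - mu) / (lam ^ 2 ^ i - lam) with hc
    have hclam : lam ^ 2 ^ i - lam ≠ 0 := fun hc0 => hne (sub_eq_zero.mp hc0)
    have hu23 : u2 ^ 2 ^ i = A c * u3 ^ 2 ^ i := by
      have hAc : A c * ((A lam) ^ 2 ^ i - A lam) = (A mu) ^ 2 ^ i - A mu := by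
        rw [← map_pow, ← map_sub, ← map_pow, ← map_sub, ← map_mul,
          div_mul_cancel₀ _ hclam]
      apply mul_left_cancel₀ hCl
      calc (A lam ^ 2 ^ i - A lam) * u2 ^ 2 ^ i
          = (A mu ^ 2 ^ i - A mu) * u3 ^ 2 ^ i := key
        _ = (A lam ^ 2 ^ i - A lam) * (A c * u3 ^ 2 ^ i) := by
            rw [← hAc]; ring
    obtain ⟨d, hd⟩ := frobF_surj c
    have hd' : d ^ 2 ^ i = c := hd
    have : u2 ^ 2 ^ i = (A d * u3) ^ 2 ^ i := by
      rw [mul_pow, ← map_pow, hd', hu23]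
    exact h23 ⟨d, frobK_inj _ _ this⟩
  have hClam0 : (A lam) ^ 2 ^ i - A lam = 0 := by
    rw [← map_pow, ← map_sub, hlamfix, sub_self, map_zero]
  -- μ is fixed by σ
  have hmufix : mu ^ 2 ^ i = mu := by
    have : ((A mu) ^ 2 ^ i - A mu) * u3 ^ 2 ^ i = 0 := by
      rw [← key, hClam0, zero_mul]
    have hCm : (A mu) ^ 2 ^ i - A mu = 0 := by
      rcases mul_eq_zero.mp this with h' | h'
      · exact h'
      · exact absurd h' hu3p
    rw [← map_pow, ← map_sub] at hCm
    exact sub_eq_zero.mp (hAinj (by simpa using hCm))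
  -- from being frobenius-fixed to being 0 or 1
  have hsq : ∀ a : Fq, a ^ 2 ^ i = a → a = 0 ∨ a = 1 := by
    intro a ha
    have hm1 : a ^ 2 ^ (h * k) = a := by
      have := FiniteField.pow_card_pow k a
      rwa [hq, ← pow_mul] at this
    have ha2 : a ^ 2 = a := by
      rcases Nat.lt_or_ge 1 (h * k) with hm | hm
      · obtain ⟨n, -, hn⟩ := Nat.exists_mul_mod_eq_one_of_coprime hgcd hm
        have hdm := Nat.div_add_mod (i * n) (h * k)
        rw [hn] at hdm
        have h1 : a ^ 2 ^ (i * n) = a := pow_two_pow_fix a i ha n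
        have h2 : a ^ 2 ^ (h * k * (i * n / (h * k))) = a :=
          pow_two_pow_fix a (h * k) hm1 _
        calc a ^ 2 = (a ^ 2 ^ (h * k * (i * n / (h * k)))) ^ 2 := by rw [h2]
          _ = a ^ 2 ^ (h * k * (i * n / (h * k)) + 1) := by
              rw [← pow_mul, ← pow_succ]
          _ = a ^ 2 ^ (i * n) := by rw [hdm]
          _ = a := h1
      · have hm' : h * k = 1 := le_antisymm hm (Nat.one_le_iff_ne_zero.mpr
          (by positivity))
        rw [hm', pow_one] at hm1; exact hm1
    have : a * (a - 1) = 0 := by ring_nf; linear_combination ha2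
    rcases mul_eq_zero.mp this with h' | h'
    · exact Or.inl h'
    · exact Or.inr (sub_eq_zero.mp h')
  -- conclude
  have hlam1 : lam = 1 := by
    rcases hsq lam hlamfix with h0 | h1
    · exfalso
      apply h13
      exact ⟨mu, by rw [← e1, h0, map_zero, zero_mul, add_zero]⟩
    · exact h1
  refine ⟨hlam1, ?_⟩
  rcases hsq mu hmufix with h0 | h1
  · exfalso
    apply h12
    refine ⟨lam, ?_⟩
    have : u1 + A lam * u2 = 0 := by rw [e1, h0, map_zero, zero_mul]
    have := eq_neg_of_add_eq_zero_left this
    rw [this]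
    rw [neg_mul_eq_neg_mul, ← map_neg]
    norm_num [CharTwo.neg_eq]
  · exact h1
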